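/- Let {P_j} be a sequence of parabolic Möbius transformations converging in PSL(2,ℂ) to a parabolic Möbius transformation P. Then there exists a sequence {β_j} of Möbius transformations converging to the identity such that β_j P_j β_j⁻¹ = P for all j. -/

import Mathlib

open scoped Pointwise Topology LinearAlgebra.Projectivization
open Filter Matrix

set_option maxHeartbeats 800000
set_option synthInstance.maxHeartbeats 400000

noncomputable section

/-- `SL(2,ℂ)`. -/
abbrev SL2C := Matrix.SpecialLinearGroup (Fin 2) ℂ

instance : TopologicalSpace SL2C := instTopologicalSpaceSubtype

/-- `PSL(2,ℂ)`, the quotient of `SL(2,ℂ)` by its center `{±I}`. -/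
abbrev PSL2 := SL2C ⧸ Subgroup.center SL2C

/-- The Riemann sphere, realized as the complex projective line. -/
abbrev RSphere := ℙ ℂ (Fin 2 → ℂ)

instance : TopologicalSpace RSphere :=
  inferInstanceAs (TopologicalSpace (Quotient (projectivizationSetoid ℂ (Fin 2 → ℂ))))

/-- The action of `SL(2,ℂ)` on the Riemann sphere by Möbius transformations. -/
instance SL2C.mulActionRSphere : MulAction SL2C RSphere where
  smul A := Projectivization.map (Matrix.SpecialLinearGroup.toLin' A).toLinearMap
    (Matrix.SpecialLinearGroup.toLin' A).injective
  one_smul x := by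
    induction x using Projectivization.ind with
    | h v hv =>
      show Projectivization.map _ _ _ = _
      rw [Projectivization.map_mk]
      simp
  mul_smul A B x := by
    induction x using Projectivization.ind with
    | h v hv =>
      show Projectivization.map _ _ _ =
        Projectivization.map _ _ (Projectivization.map _ _ _)
      rw [Projectivization.map_mk, Projectivization.map_mk, Projectivization.map_mk]
      simp

lemma SL2C.center_smul_eq (A : SL2C) (hA : A ∈ Subgroup.center SL2C) (x : RSphere) :
    A • x = x := by
  obtain ⟨r, hr, hrA⟩ := Matrix.SpecialLinearGroup.mem_center_iff.mp hA
  induction x using Projectivization.ind with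
  | h v hv =>
    show Projectivization.map _ _ _ = _
    rw [Projectivization.map_mk]
    have hr0 : r ≠ 0 := by
      intro h; rw [h] at hr; simpa using hr
    rw [Projectivization.mk_eq_mk_iff']
    refine ⟨r, ?_⟩
    have : (Matrix.SpecialLinearGroup.toLin' A).toLinearMap v
        = (A : Matrix (Fin 2) (Fin 2) ℂ) *ᵥ v := by
      simp [Matrix.SpecialLinearGroup.toLin'_apply, Matrix.toLin'_apply]
    rw [this, ← hrA]
    show r • v = (Matrix.scalar (Fin 2) r) *ᵥ v
    funext i
    simp [Matrix.scalar_apply, Matrix.mulVec_diagonal]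

end

noncomputable section

/-- The action of `PSL(2,ℂ)` on the Riemann sphere, descended from that of `SL(2,ℂ)`. -/
def mobiusPerm : PSL2 →* Equiv.Perm RSphere :=
  QuotientGroup.lift (Subgroup.center SL2C) (MulAction.toPermHom SL2C RSphere)
    (by
      intro A hA
      ext x
      simpa using SL2C.center_smul_eq A hA x)

/-- Elements of `PSL(2,ℂ)` act on the Riemann sphere as Möbius transformations. -/
instance PSL2.mulActionRSphere : MulAction PSL2 RSphere where
  smul γ x := mobiusPerm γ x
  one_smul x := by
    show mobiusPerm 1 x = x
    simp
  mul_smul a b x := by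
    show mobiusPerm (a * b) x = mobiusPerm a (mobiusPerm b x)
    simp

end

noncomputable section

/-- A Möbius transformation is parabolic if it is not the identity and has exactly one
fixed point on the Riemann sphere. -/
def IsParabolic (γ : PSL2) : Prop :=
  γ ≠ 1 ∧ ∃! z : RSphere, γ • z = z

/-- The `PSL(2,ℂ)`-element corresponding to `z ↦ μ² z` (represented by the diagonal
matrix with entries `μ, μ⁻¹`). -/
def dilation (μ : ℂˣ) : PSL2 :=
  QuotientGroup.mk (⟨!![(μ : ℂ), 0; 0, ((μ⁻¹ : ℂˣ) : ℂ)], by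
    simp [Matrix.det_fin_two_of]⟩ : SL2C)

/-- A Möbius transformation is loxodromic if it is conjugate in `PSL(2,ℂ)` to `z ↦ λ z`
for some `λ ≠ 0` with `|λ| ≠ 1`.  (Every such `λ` is of the form `μ²` for a unit `μ`.) -/
def IsLoxodromic (γ : PSL2) : Prop :=
  ∃ μ : ℂˣ, ‖((μ : ℂ) ^ 2)‖ ≠ 1 ∧ ∃ β : PSL2, β * γ * β⁻¹ = dilation μ

/-- A representation is discrete and faithful if it is injective with discrete image. -/
def IsDiscreteFaithful {G : Type*} [Group G] (ρ : G →* PSL2) : Prop :=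
  Function.Injective ρ ∧ DiscreteTopology ρ.range

/-- Algebraic convergence of a sequence of representations. -/
def ConvergesAlgebraically {G : Type*} [Group G] (ρs : ℕ → G →* PSL2) (ρ : G →* PSL2) : Prop :=
  ∀ g : G, Tendsto (fun j => ρs j g) atTop (𝓝 (ρ g))

/-- A sequence of representations with algebraic limit `ρ` is type-preserving if `ρs j g` is
parabolic exactly when `ρ g` is. -/
def TypePreserving {G : Type*} [Group G] (ρs : ℕ → G →* PSL2) (ρ : G →* PSL2) : Prop :=
  ∀ (j : ℕ) (g : G), IsParabolic (ρs j g) ↔ IsParabolic (ρ g)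

/-- Geometric convergence of a sequence of subgroups of `PSL(2,ℂ)`: every element of the limit
is a limit of elements of the approximates, and every accumulation point of a sequence of
elements of the approximates lies in the limit. -/
def GeometricallyConvergesTo (Γs : ℕ → Subgroup PSL2) (Γ : Subgroup PSL2) : Prop :=
  (∀ γ ∈ Γ, ∃ s : ℕ → PSL2, (∀ j, s j ∈ Γs j) ∧ Tendsto s atTop (𝓝 γ)) ∧
  (∀ s : ℕ → PSL2, (∀ j, s j ∈ Γs j) → ∀ γ : PSL2, MapClusterPt γ atTop s → γ ∈ Γ)

/-- Strong convergence: algebraic convergence together with geometric convergence of the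
images. -/
def ConvergesStrongly {G : Type*} [Group G] (ρs : ℕ → G →* PSL2) (ρ : G →* PSL2) : Prop :=
  ConvergesAlgebraically ρs ρ ∧ GeometricallyConvergesTo (fun j => (ρs j).range) ρ.range

/-- Hausdorff convergence of a sequence of (closed) subsets of the Riemann sphere. -/
def HausdorffConvergesTo (Xs : ℕ → Set RSphere) (X : Set RSphere) : Prop :=
  (∀ x ∈ X, ∃ s : ℕ → RSphere, (∀ j, s j ∈ Xs j) ∧ Tendsto s atTop (𝓝 x)) ∧
  (∀ s : ℕ → RSphere, (∀ j, s j ∈ Xs j) → ∀ x : RSphere, MapClusterPt x atTop s → x ∈ X)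

/-- A group of Möbius transformations acts properly discontinuously on an open set `U` if for
every compact `K ⊆ U` only finitely many group elements carry `K` to a set meeting `K`. -/
def ProperlyDiscontinuousOn (Γ : Subgroup PSL2) (U : Set RSphere) : Prop :=
  ∀ K : Set RSphere, K ⊆ U → IsCompact K →
    {γ : PSL2 | γ ∈ Γ ∧ ((γ • K) ∩ K).Nonempty}.Finite

/-- The domain of discontinuity: the largest open set on which `Γ` acts properly
discontinuously. -/
def domainOfDiscontinuity (Γ : Subgroup PSL2) : Set RSphere :=
  ⋃₀ {U : Set RSphere | IsOpen U ∧ ProperlyDiscontinuousOn Γ U}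

/-- The limit set: the complement of the domain of discontinuity. -/
def limitSet (Γ : Subgroup PSL2) : Set RSphere :=
  (domainOfDiscontinuity Γ)ᶜ

/-- The connected components of a subset of the Riemann sphere. -/
def componentsOf (S : Set RSphere) : Set (Set RSphere) :=
  {Δ : Set RSphere | ∃ z ∈ S, Δ = connectedComponentIn S z}

/-- The component subgroup of `Γ` associated to `Δ`: the stabilizer of `Δ` in `Γ`. -/
def componentSubgroup (Γ : Subgroup PSL2) (Δ : Set RSphere) : Subgroup PSL2 :=
  Γ ⊓ MulAction.stabilizer PSL2 Δ

/-- `Φ` is a component subgroup of `Γ` if it is the stabilizer in `Γ` of a connected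
component of the domain of discontinuity of `Γ`. -/
def IsComponentSubgroup (Γ Φ : Subgroup PSL2) : Prop :=
  ∃ Δ ∈ componentsOf (domainOfDiscontinuity Γ), Φ = componentSubgroup Γ Δ

/-- A Jordan curve in the Riemann sphere: the image of a continuous injection of the circle. -/
def IsJordanCurve (C : Set RSphere) : Prop :=
  ∃ f : Circle → RSphere, Continuous f ∧ Function.Injective f ∧ Set.range f = C

/-- `γ` interchanges two distinct components of the domain of discontinuity of `Γ`. -/
def SwapsComponents (Γ : Subgroup PSL2) (γ : PSL2) : Prop :=
  ∃ Δ₁ ∈ componentsOf (domainOfDiscontinuity Γ),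
    ∃ Δ₂ ∈ componentsOf (domainOfDiscontinuity Γ),
      Δ₁ ≠ Δ₂ ∧ γ • Δ₁ = Δ₂ ∧ γ • Δ₂ = Δ₁

/-- A quasifuchsian group: a finitely generated Kleinian group whose limit set is a Jordan
curve, containing no element interchanging the two components of its domain of
discontinuity. -/
def IsQuasifuchsian (Γ : Subgroup PSL2) : Prop :=
  Group.FG Γ ∧ DiscreteTopology Γ ∧ IsJordanCurve (limitSet Γ) ∧
    ¬ ∃ γ ∈ Γ, SwapsComponents Γ γ

/-- An extended quasifuchsian group: as above, but containing an element interchanging the two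
components of its domain of discontinuity. -/
def IsExtendedQuasifuchsian (Γ : Subgroup PSL2) : Prop :=
  Group.FG Γ ∧ DiscreteTopology Γ ∧ IsJordanCurve (limitSet Γ) ∧
    ∃ γ ∈ Γ, SwapsComponents Γ γ

/-- A web group: a finitely generated Kleinian group whose domain of discontinuity has
infinitely many components, all of whose component subgroups are quasifuchsian. -/
def IsWebGroup (Γ : Subgroup PSL2) : Prop :=
  Group.FG Γ ∧ DiscreteTopology Γ ∧
    (componentsOf (domainOfDiscontinuity Γ)).Infinite ∧
    ∀ Δ ∈ componentsOf (domainOfDiscontinuity Γ), IsQuasifuchsian (componentSubgroup Γ Δ)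

/-- A generalized web group is quasifuchsian, extended quasifuchsian or web. -/
def IsGeneralizedWebGroup (Γ : Subgroup PSL2) : Prop :=
  IsQuasifuchsian Γ ∨ IsExtendedQuasifuchsian Γ ∨ IsWebGroup Γ

/-- `X` is precisely invariant under `Φ` in `Γ` if `Φ` is the stabilizer of `X` in `Γ` and
no element of `Γ ∖ Φ` carries `X` to a set meeting `X`. -/
def PreciselyInvariant (Γ Φ : Subgroup PSL2) (X : Set RSphere) : Prop :=
  Φ ≤ Γ ∧ (∀ γ ∈ Γ, (γ • X = X ↔ γ ∈ Φ)) ∧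
    ∀ γ ∈ Γ, γ ∉ Φ → Disjoint (γ • X) X

/-- `γ` is primitive in `Γ`: it is not a power `δ^n` with `δ ∈ Γ` and `|n| ≥ 2`. -/
def IsPrimitiveIn (Γ : Subgroup PSL2) (γ : PSL2) : Prop :=
  ¬ ∃ δ ∈ Γ, ∃ n : ℤ, 2 ≤ |n| ∧ δ ^ n = γ

/-- A closed Jordan domain: the closure of a connected component of the complement of a
Jordan curve. -/
def IsClosedJordanDomain (D : Set RSphere) : Prop :=
  ∃ C : Set RSphere, IsJordanCurve C ∧
    ∃ z ∈ Cᶜ, D = closure (connectedComponentIn Cᶜ z)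

/-- A cusp region for a parabolic `γ ∈ Γ`: a closed Jordan domain, precisely invariant under
`⟨γ⟩` in `Γ`, meeting the limit set exactly in the fixed point of `γ`. -/
def IsCuspRegion (Γ : Subgroup PSL2) (γ : PSL2) (D : Set RSphere) : Prop :=
  IsClosedJordanDomain D ∧ PreciselyInvariant Γ (Subgroup.zpowers γ) D ∧
    D ∩ limitSet Γ = {z : RSphere | γ • z = z}

/-- The cusp region `D` for the primitive parabolic `ρ h` persists in the approximates:
whenever the sequence is normalized about `ρ h` by conjugating by Möbius transformations
`β j → 1` with `β j * ρs j h * (β j)⁻¹ = ρ h`, `D` is a cusp region for `ρ h` in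
`β j • ρs j (G) • (β j)⁻¹` for all sufficiently large `j`. -/
def PersistsInApproximates {G : Type*} [Group G] (ρs : ℕ → G →* PSL2) (ρ : G →* PSL2)
    (h : G) (D : Set RSphere) : Prop :=
  ∀ β : ℕ → PSL2, Tendsto β atTop (𝓝 1) → (∀ j, β j * ρs j h * (β j)⁻¹ = ρ h) →
    ∀ᶠ j in atTop,
      IsCuspRegion (Subgroup.map (MulAut.conj (β j)).toMonoidHom (ρs j).range) (ρ h) D

/-- A degenerate group: a finitely generated Kleinian group whose domain of discontinuity
and limit set are both non-empty and connected. -/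
def IsDegenerate (Γ : Subgroup PSL2) : Prop :=
  Group.FG Γ ∧ DiscreteTopology Γ ∧ IsConnected (domainOfDiscontinuity Γ) ∧
    IsConnected (limitSet Γ)

/-- A degenerate group without accidental parabolics: every primitive parabolic element
stabilizing a component `Δ` of the domain of discontinuity has a cusp region contained
(off the limit set) in `Δ`. -/
def IsDegenerateWithoutAccidentalParabolics (Γ : Subgroup PSL2) : Prop :=
  IsDegenerate Γ ∧
    ∀ γ ∈ Γ, IsParabolic γ → IsPrimitiveIn Γ γ →
      ∀ Δ ∈ componentsOf (domainOfDiscontinuity Γ), γ • Δ = Δ →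
        ∃ D : Set RSphere, IsCuspRegion Γ γ D ∧ D \ limitSet Γ ⊆ Δ

/-- An elementary group: the limit set contains at most two points. -/
def IsElementary (Γ : Subgroup PSL2) : Prop :=
  ∀ x ∈ limitSet Γ, ∀ y ∈ limitSet Γ, ∀ z ∈ limitSet Γ, x = y ∨ x = z ∨ y = z

/-- A fundamental domain for `Γ`: an open subset of the domain of discontinuity, disjoint
from all its translates by non-trivial elements of `Γ`, whose closure meets every
`Γ`-orbit in the domain of discontinuity. -/
def IsFundamentalDomain (Γ : Subgroup PSL2) (D : Set RSphere) : Prop :=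
  IsOpen D ∧ D ⊆ domainOfDiscontinuity Γ ∧
    (∀ γ ∈ Γ, γ ≠ 1 → Disjoint (γ • D) D) ∧
    ∀ z ∈ domainOfDiscontinuity Γ, ∃ γ ∈ Γ, γ • z ∈ closure D

/-- A group is virtually abelian if it has an abelian subgroup of finite index. -/
def VirtuallyAbelian (G : Type*) [Group G] : Prop :=
  ∃ H : Subgroup G, H.FiniteIndex ∧ ∀ a ∈ H, ∀ b ∈ H, a * b = b * a

open scoped commutatorElement in
/-- The relator `[a₁,b₁]⋯[a_g,b_g]` of the genus-`g` surface group, in the free group on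
generators `aᵢ = (i, true)`, `bᵢ = (i, false)`. -/
def surfaceRelator (g : ℕ) : FreeGroup (Fin g × Bool) :=
  ((List.finRange g).map fun i =>
    ⁅FreeGroup.of (i, true), FreeGroup.of (i, false)⁆).prod

/-- The fundamental group of the closed orientable surface of genus `g`. -/
def SurfaceGroup (g : ℕ) : Type :=
  PresentedGroup ({surfaceRelator g} : Set (FreeGroup (Fin g × Bool)))

instance (g : ℕ) : Group (SurfaceGroup g) :=
  inferInstanceAs (Group (PresentedGroup _))

/-- An orientable surface group: a group isomorphic to the fundamental group of a closed
orientable surface of genus `g ≥ 1`. -/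
def IsSurfaceGroup (A : Type*) [Group A] : Prop :=
  ∃ g : ℕ, 1 ≤ g ∧ Nonempty (A ≃* SurfaceGroup g)

/-- `G` is a non-trivial free product of orientable surface groups and infinite cyclic
groups. -/
def IsFreeProductOfSurfaceAndCyclicGroups (G : Type*) [Group G] : Prop :=
  ∃ k : ℕ, 2 ≤ k ∧ ∃ (A : Fin k → Type) (_ : ∀ i, Group (A i)),
    (∀ i, IsSurfaceGroup (A i) ∨ Nonempty (A i ≃* Multiplicative ℤ)) ∧
    Nonempty (G ≃* Monoid.CoprodI A)

end

noncomputable section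

/-- The two-element family of subgroups `G₁`, `G₂`. -/
def amalgFamily {G : Type*} [Group G] (G₁ G₂ : Subgroup G) : Bool → Subgroup G
  | true => G₁
  | false => G₂

/-- The inclusions of `⟨h⟩` into `G₁` and `G₂`. -/
def amalgIncl {G : Type*} [Group G] {G₁ G₂ : Subgroup G} {h : G}
    (h1 : Subgroup.zpowers h ≤ G₁) (h2 : Subgroup.zpowers h ≤ G₂) :
    ∀ i : Bool, ↥(Subgroup.zpowers h) →* ↥(amalgFamily G₁ G₂ i)
  | true => Subgroup.inclusion h1
  | false => Subgroup.inclusion h2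

/-- The natural homomorphism from the amalgamated free product `G₁ *_{⟨h⟩} G₂` to `G`. -/
def amalgamatedToGroup {G : Type*} [Group G] {G₁ G₂ : Subgroup G} {h : G}
    (h1 : Subgroup.zpowers h ≤ G₁) (h2 : Subgroup.zpowers h ≤ G₂) :
    Monoid.PushoutI (amalgIncl h1 h2) →* G :=
  Monoid.PushoutI.lift (fun i => (amalgFamily G₁ G₂ i).subtype)
    (Subgroup.zpowers h).subtype
    (by intro i; cases i <;> (ext x; rfl))

end


noncomputable section ParabolicNormalizationAux

namespace PNorm

open Matrix Filter Topology

local notation "Mat" => Matrix (Fin 2) (Fin 2) ℂ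

/-! ### Generalities on `SL2C` and its action on the sphere -/

lemma sl2_mulVec_ne_zero (X : SL2C) {v : Fin 2 → ℂ} (hv : v ≠ 0) :
    (X : Mat) *ᵥ v ≠ 0 := by
  intro h
  apply hv
  have h1 : ((X⁻¹ * X : SL2C) : Mat) *ᵥ v = v := by
    rw [inv_mul_cancel, Matrix.SpecialLinearGroup.coe_one, Matrix.one_mulVec]
  rw [Matrix.SpecialLinearGroup.coe_mul, ← Matrix.mulVec_mulVec, h,
    Matrix.mulVec_zero] at h1
  exact h1.symm

lemma mk_smul_mk (X : SL2C) (v : Fin 2 → ℂ) (hv : v ≠ 0) :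
    (QuotientGroup.mk X : PSL2) • Projectivization.mk ℂ v hv
      = Projectivization.mk ℂ ((X : Mat) *ᵥ v) (sl2_mulVec_ne_zero X hv) := by
  show mobiusPerm (QuotientGroup.mk X) (Projectivization.mk ℂ v hv) = _
  rw [mobiusPerm]
  erw [QuotientGroup.lift_mk]
  show (X • Projectivization.mk ℂ v hv : RSphere) = _
  show Projectivization.map _ _ _ = _
  rw [Projectivization.map_mk, Projectivization.mk_eq_mk_iff']
  refine ⟨1, ?_⟩
  simp [Matrix.SpecialLinearGroup.toLin'_apply, Matrix.toLin'_apply]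

lemma exists_kernelVec (M : Mat) (h : M.det = 0) :
    ∃ v : Fin 2 → ℂ, v ≠ 0 ∧ M *ᵥ v = 0 := by
  have hd : M 0 0 * M 1 1 - M 0 1 * M 1 0 = 0 := by rw [← Matrix.det_fin_two]; exact h
  by_cases h0 : M 0 0 = 0 ∧ M 0 1 = 0
  · by_cases h1 : M 1 0 = 0 ∧ M 1 1 = 0
    · refine ⟨![1, 0], ?_, ?_⟩
      · intro hv; simpa using congrFun hv 0
      · funext i; fin_cases i <;>
          simp [Matrix.mulVec, dotProduct, Fin.sum_univ_two, h0.1, h0.2, h1.1, h1.2]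
    · refine ⟨![M 1 1, -(M 1 0)], ?_, ?_⟩
      · intro hv
        exact h1 ⟨by simpa using congrFun hv 1, by simpa using congrFun hv 0⟩
      · funext i; fin_cases i <;>
          simp [Matrix.mulVec, dotProduct, Fin.sum_univ_two, h0.1, h0.2] <;> ring
  · refine ⟨![M 0 1, -(M 0 0)], ?_, ?_⟩
    · intro hv
      exact h0 ⟨by simpa using congrFun hv 1, by simpa using congrFun hv 0⟩
    · funext i; fin_cases i <;>
        simp [Matrix.mulVec, dotProduct, Fin.sum_univ_two]
      · ring
      · linear_combination -hd

lemma prop_of_cross (v w : Fin 2 → ℂ) (hw : w ≠ 0) (h : v 0 * w 1 - v 1 * w 0 = 0) :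
    ∃ c : ℂ, v = c • w := by
  by_cases h0 : w 0 = 0
  · have h1 : w 1 ≠ 0 := by
      intro h1; apply hw; funext i; fin_cases i <;> simp [h0, h1]
    refine ⟨v 1 / w 1, ?_⟩
    funext i; fin_cases i
    · have hv0 : v 0 = 0 := by
        have hz : v 0 * w 1 = 0 := by rw [h0] at h; linear_combination h
        rcases mul_eq_zero.mp hz with h' | h'
        · exact h'
        · exact absurd h' h1
      show v 0 = v 1 / w 1 * w 0
      simp [hv0, h0]
    · show v 1 = v 1 / w 1 * w 1
      rw [div_mul_cancel₀ _ h1]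
  · refine ⟨v 0 / w 0, ?_⟩
    funext i; fin_cases i
    · show v 0 = v 0 / w 0 * w 0
      rw [div_mul_cancel₀ _ h0]
    · show v 1 = v 0 / w 0 * w 1
      rw [div_mul_eq_mul_div, eq_div_iff h0]
      linear_combination -h

lemma matrix_ne_pm_one (X : SL2C) (h : (QuotientGroup.mk X : PSL2) ≠ 1) :
    (X : Mat) ≠ 1 ∧ (X : Mat) ≠ -1 := by
  have hc : X ∉ Subgroup.center SL2C := by
    intro hX; exact h (by rwa [QuotientGroup.eq_one_iff])
  constructor
  · intro h1
    apply hc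
    have : X = (1 : SL2C) := Subtype.ext (by rw [h1, Matrix.SpecialLinearGroup.coe_one])
    rw [this]; exact Subgroup.one_mem _
  · intro h1
    apply hc
    rw [Matrix.SpecialLinearGroup.mem_center_iff]
    refine ⟨-1, by norm_num, ?_⟩
    rw [h1]
    ext i j
    simp [Matrix.scalar_apply, Matrix.diagonal, Matrix.one_apply]
    split_ifs <;> simp

/-- Any `SL₂` lift of a parabolic element has trace `±2`. -/
lemma trace_pm_two (X : SL2C) (hpar : IsParabolic (QuotientGroup.mk X : PSL2)) :
    Matrix.trace (X : Mat) = 2 ∨ Matrix.trace (X : Mat) = -2 := by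
  by_contra hcon
  push_neg at hcon
  obtain ⟨ht2, htm2⟩ := hcon
  set t : ℂ := Matrix.trace (X : Mat) with htdef
  have hdet : (X : Mat).det = 1 := X.prop
  have hdet2 : (X : Mat) 0 0 * (X : Mat) 1 1 - (X : Mat) 0 1 * (X : Mat) 1 0 = 1 := by
    rw [← Matrix.det_fin_two]; exact hdet
  have htr : (X : Mat) 0 0 + (X : Mat) 1 1 = t := (Matrix.trace_fin_two _).symm
  have hd : t ^ 2 - 4 ≠ 0 := by
    intro h
    have h' : (t - 2) * (t + 2) = 0 := by linear_combination h
    rcases mul_eq_zero.mp h' with h'' | h''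
    · exact ht2 (by linear_combination h'')
    · exact htm2 (by linear_combination h'')
  set r : ℂ := (t ^ 2 - 4) ^ ((1 : ℂ)/2) with hrdef
  have hr2 : r * r = t ^ 2 - 4 := by
    rw [hrdef, ← Complex.cpow_add _ _ hd]
    norm_num
  have hr0 : r ≠ 0 := by
    intro h; rw [h, mul_zero] at hr2; exact hd hr2.symm
  set l1 : ℂ := (t + r) / 2 with hl1
  set l2 : ℂ := (t - r) / 2 with hl2
  have hsum : l1 + l2 = t := by rw [hl1, hl2]; ring
  have hprod : l1 * l2 = 1 := by
    rw [hl1, hl2]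
    have : (t + r) / 2 * ((t - r) / 2) = (t ^ 2 - r * r) / 4 := by ring
    rw [this, hr2]; ring
  have hne : l1 ≠ l2 := by
    intro h
    apply hr0
    have : r = l1 - l2 := by rw [hl1, hl2]; ring
    rw [this, h, sub_self]
  have eig : ∀ l : ℂ, l * l - t * l + 1 = 0 →
      ∃ v : Fin 2 → ℂ, v ≠ 0 ∧ (X : Mat) *ᵥ v = l • v := by
    intro l hl
    obtain ⟨v, hv, hker⟩ := exists_kernelVec ((X : Mat) - l • 1) (by
      rw [Matrix.det_fin_two]
      simp only [Matrix.sub_apply, Matrix.smul_apply, Matrix.one_apply, smul_eq_mul]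
      norm_num
      linear_combination hdet2 - l * htr + hl)
    refine ⟨v, hv, ?_⟩
    rwa [Matrix.sub_mulVec, sub_eq_zero, Matrix.smul_mulVec, Matrix.one_mulVec] at hker
  obtain ⟨v1, hv1, he1⟩ := eig l1 (by linear_combination l1 * hsum - hprod)
  obtain ⟨v2, hv2, he2⟩ := eig l2 (by linear_combination l2 * hsum - hprod)
  obtain ⟨hne1, z, hz, huniq⟩ := hpar
  have hf1 : (QuotientGroup.mk X : PSL2) • Projectivization.mk ℂ v1 hv1
      = Projectivization.mk ℂ v1 hv1 := by
    rw [mk_smul_mk, Projectivization.mk_eq_mk_iff']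
    exact ⟨l1, he1.symm⟩
  have hf2 : (QuotientGroup.mk X : PSL2) • Projectivization.mk ℂ v2 hv2
      = Projectivization.mk ℂ v2 hv2 := by
    rw [mk_smul_mk, Projectivization.mk_eq_mk_iff']
    exact ⟨l2, he2.symm⟩
  have e1 := huniq _ hf1
  have e2 := huniq _ hf2
  have hmk : Projectivization.mk ℂ v1 hv1 = Projectivization.mk ℂ v2 hv2 := by
    rw [e1, e2]
  obtain ⟨c, hc⟩ := (Projectivization.mk_eq_mk_iff' _ _ _ hv1 hv2).mp hmk
  have hX1 : (X : Mat) *ᵥ v1 = l2 • v1 := by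
    rw [← hc, Matrix.mulVec_smul, he2, smul_comm]
  have h12 : l1 • v1 = l2 • v1 := by rw [← he1, hX1]
  have : (l1 - l2) • v1 = 0 := by rw [sub_smul, h12, sub_self]
  rcases smul_eq_zero.mp this with h' | h'
  · exact hne (sub_eq_zero.mp h')
  · exact hv1 h'

lemma unipotent_sq (X : Mat) (hdet : X.det = 1) (htr : X.trace = 2) :
    (X - 1) * (X - 1) = 0 := by
  have h1 : X 0 0 * X 1 1 - X 0 1 * X 1 0 = 1 := by rw [← Matrix.det_fin_two]; exact hdet
  have h2 : X 0 0 + X 1 1 = 2 := by rw [← Matrix.trace_fin_two]; exact htr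
  ext i j
  fin_cases i <;> fin_cases j <;>
    simp [Matrix.mul_apply, Fin.sum_univ_two, Matrix.sub_apply, Matrix.one_apply]
  · linear_combination -h1 + X 0 0 * h2
  · linear_combination X 0 1 * h2
  · linear_combination X 1 0 * h2
  · linear_combination -h1 + X 1 1 * h2

/-! ### Finding a common test vector -/

lemma cols_zero (N : Mat) (h0 : N *ᵥ ![1, 0] = 0) (h1 : N *ᵥ ![0, 1] = 0) : N = 0 := by
  ext i j
  have a0 := congrFun h0 i
  have a1 := congrFun h1 i
  simp [Matrix.mulVec, dotProduct, Fin.sum_univ_two] at a0 a1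
  fin_cases j
  · simpa using a0
  · simpa using a1

lemma mulVec_e01 (N : Mat) : N *ᵥ ![1, 1] = N *ᵥ ![1, 0] + N *ᵥ ![0, 1] := by
  funext i
  simp [Matrix.mulVec, dotProduct, Fin.sum_univ_two]
  fin_cases i <;> simp

/-- A nonzero matrix kills at most one of the three directions `e₀, e₁, e₀+e₁`. -/
lemma at_most_one (N : Mat) (hN : N ≠ 0) :
    (N *ᵥ ![1, 0] = 0 → N *ᵥ ![0, 1] ≠ 0 ∧ N *ᵥ ![1, 1] ≠ 0) ∧
    (N *ᵥ ![0, 1] = 0 → N *ᵥ ![1, 0] ≠ 0 ∧ N *ᵥ ![1, 1] ≠ 0) ∧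
    (N *ᵥ ![1, 1] = 0 → N *ᵥ ![1, 0] ≠ 0 ∧ N *ᵥ ![0, 1] ≠ 0) := by
  refine ⟨fun h0 => ⟨?_, ?_⟩, fun h1 => ⟨?_, ?_⟩, fun h2 => ⟨?_, ?_⟩⟩ <;>
    intro hx <;> apply hN
  · exact cols_zero N h0 hx
  · have := mulVec_e01 N; rw [hx, h0, zero_add] at this
    exact cols_zero N h0 this.symm
  · exact cols_zero N hx h1
  · have := mulVec_e01 N; rw [hx, h1, add_zero] at this
    exact cols_zero N this.symm h1
  · have := mulVec_e01 N; rw [h2, hx, zero_add] at this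
    exact cols_zero N hx this.symm
  · have := mulVec_e01 N; rw [h2, hx, add_zero] at this
    exact cols_zero N this.symm hx

lemma exists_good_u (N N' : Mat) (hN : N ≠ 0) (hN' : N' ≠ 0) :
    ∃ u : Fin 2 → ℂ, N *ᵥ u ≠ 0 ∧ N' *ᵥ u ≠ 0 := by
  obtain ⟨hA, hB, hC⟩ := at_most_one N hN
  obtain ⟨hA', hB', hC'⟩ := at_most_one N' hN'
  by_cases h0 : N *ᵥ ![1, 0] = 0
  · by_cases h0' : N' *ᵥ ![0, 1] = 0
    · exact ⟨![1, 1], (hA h0).2, (hB' h0').2⟩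
    · exact ⟨![0, 1], (hA h0).1, h0'⟩
  · by_cases h0' : N' *ᵥ ![1, 0] = 0
    · by_cases h1 : N *ᵥ ![0, 1] = 0
      · exact ⟨![1, 1], (hB h1).2, (hA' h0').2⟩
      · exact ⟨![0, 1], h1, (hA' h0').1⟩
    · exact ⟨![1, 0], h0, h0'⟩

/-! ### The conjugating matrix -/

/-- The matrix with columns `u` and `N *ᵥ u`. -/
def colM (N : Mat) (u : Fin 2 → ℂ) : Mat :=
  Matrix.of fun i j => if j = 0 then u i else (N *ᵥ u) i

lemma colM_apply0 (N : Mat) (u : Fin 2 → ℂ) (i : Fin 2) : colM N u i 0 = u i := rfl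

lemma colM_apply1 (N : Mat) (u : Fin 2 → ℂ) (i : Fin 2) : colM N u i 1 = (N *ᵥ u) i := rfl

lemma colM_det (N : Mat) (u : Fin 2 → ℂ) :
    (colM N u).det = u 0 * (N *ᵥ u) 1 - (N *ᵥ u) 0 * u 1 := by
  rw [Matrix.det_fin_two, colM_apply0, colM_apply0, colM_apply1, colM_apply1]

lemma colM_det_ne (N : Mat) (u : Fin 2 → ℂ) (hsq : N * N = 0) (hu : N *ᵥ u ≠ 0) :
    (colM N u).det ≠ 0 := by
  intro h
  rw [colM_det] at h
  obtain ⟨c, hc⟩ := prop_of_cross u (N *ᵥ u) hu (by linear_combination h)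
  apply hu
  rw [hc, Matrix.mulVec_smul, Matrix.mulVec_mulVec, hsq, Matrix.zero_mulVec, smul_zero]

/-- The standard lower unipotent. -/
def Fm : Mat := !![1, 0; 1, 1]

lemma mul_colM (X N : Mat) (u : Fin 2 → ℂ) :
    X * colM N u = Matrix.of fun i j =>
      if j = 0 then (X *ᵥ u) i else (X *ᵥ (N *ᵥ u)) i := by
  ext i j
  by_cases hj : j = 0 <;>
    simp [Matrix.mul_apply, Matrix.mulVec, dotProduct, colM, hj]

lemma colM_mul_Fm (N : Mat) (u : Fin 2 → ℂ) :
    colM N u * Fm = Matrix.of fun i j =>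
      if j = 0 then u i + (N *ᵥ u) i else (N *ᵥ u) i := by
  ext i j
  fin_cases j <;> simp [Matrix.mul_apply, Fin.sum_univ_two, colM, Fm]

lemma unip_colM (A : Mat) (u : Fin 2 → ℂ) (hsq : (A - 1) * (A - 1) = 0) :
    A * colM (A - 1) u = colM (A - 1) u * Fm := by
  have h1 : A * (A - 1) = A - 1 := by
    have h2 : A * (A - 1) = (A - 1) * (A - 1) + (A - 1) := by noncomm_ring
    rw [h2, hsq, zero_add]
  rw [mul_colM, colM_mul_Fm]
  ext i j
  by_cases hj : j = 0
  · have hsub : (A - 1) *ᵥ u = A *ᵥ u - u := by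
      rw [Matrix.sub_mulVec, Matrix.one_mulVec]
    simp [hj, hsub]
  · simp only [Matrix.of_apply, if_neg hj]
    rw [Matrix.mulVec_mulVec, h1]

lemma adj_comm (A M : Mat) (hAM : A * M = M * Fm) (hd : M.det ≠ 0) :
    M.adjugate * A = Fm * M.adjugate := by
  have e1 : M.adjugate * A * M = M.det • Fm := by
    rw [mul_assoc, hAM, ← mul_assoc, Matrix.adjugate_mul, Matrix.smul_mul, one_mul]
  have e2 : Fm * M.adjugate * M = M.det • Fm := by
    rw [mul_assoc, Matrix.adjugate_mul, Matrix.mul_smul, mul_one]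
  have h1 : (M.adjugate * A - Fm * M.adjugate) * M = 0 := by
    rw [sub_mul, e1, e2, sub_self]
  have h2 : (M.adjugate * A - Fm * M.adjugate) * M * M.adjugate = 0 := by
    rw [h1, zero_mul]
  rw [mul_assoc, Matrix.mul_adjugate, Matrix.mul_smul, mul_one] at h2
  rcases smul_eq_zero.mp h2 with h | h
  · exact absurd h hd
  · exact sub_eq_zero.mp h

/-- The conjugating matrix carrying the unipotent `X` to the unipotent `A`. -/
def conjMat (A X : Mat) (u : Fin 2 → ℂ) : Mat :=
  (((colM (X - 1) u).det / (colM (A - 1) u).det) ^ ((1 : ℂ)/2)) •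
    (((colM (X - 1) u).det)⁻¹ • (colM (A - 1) u * (colM (X - 1) u).adjugate))

lemma conjMat_mul (A X : Mat) (u : Fin 2 → ℂ)
    (hA : (A - 1) * (A - 1) = 0) (hX : (X - 1) * (X - 1) = 0)
    (hdX : (colM (X - 1) u).det ≠ 0) :
    conjMat A X u * X = A * conjMat A X u := by
  have hAM := unip_colM A u hA
  have hXM := unip_colM X u hX
  have hadj := adj_comm X (colM (X - 1) u) hXM hdX
  unfold conjMat
  rw [Matrix.smul_mul, Matrix.mul_smul, Matrix.smul_mul, Matrix.mul_smul]
  congr 1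
  congr 1
  rw [mul_assoc, hadj, ← mul_assoc, ← hAM, mul_assoc]

lemma sqrt_sq {z : ℂ} (hz : z ≠ 0) : (z ^ ((1 : ℂ)/2)) * (z ^ ((1 : ℂ)/2)) = z := by
  rw [← Complex.cpow_add _ _ hz]
  norm_num

lemma conjMat_det (A X : Mat) (u : Fin 2 → ℂ)
    (hdA : (colM (A - 1) u).det ≠ 0) (hdX : (colM (X - 1) u).det ≠ 0) :
    (conjMat A X u).det = 1 := by
  set dA := (colM (A - 1) u).det
  set dX := (colM (X - 1) u).det
  have hr : dX / dA ≠ 0 := div_ne_zero hdX hdA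
  unfold conjMat
  rw [Matrix.det_smul, Matrix.det_smul, Matrix.det_mul, Matrix.det_adjugate]
  have hcard : Fintype.card (Fin 2) = 2 := by simp
  rw [hcard]
  have hs : ((dX / dA) ^ ((1 : ℂ)/2)) ^ 2 = dX / dA := by
    rw [sq, sqrt_sq hr]
  rw [hs]
  field_simp
  change dX * dA * dX ^ (2 - 1) / dX ^ 2 = dA
  rw [div_eq_iff (pow_ne_zero 2 hdX)]
  ring

/-! ### `SL2C`-level conjugation -/

lemma conj_spec (a x : SL2C) (hta : Matrix.trace (a : Mat) = 2)
    (htx : Matrix.trace (x : Mat) = 2) (u : Fin 2 → ℂ)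
    (hua : ((a : Mat) - 1) *ᵥ u ≠ 0) (hux : ((x : Mat) - 1) *ᵥ u ≠ 0) :
    ∃ b : SL2C, (b : Mat) = conjMat (a : Mat) (x : Mat) u ∧ b * x * b⁻¹ = a := by
  have hsqa : ((a : Mat) - 1) * ((a : Mat) - 1) = 0 := unipotent_sq _ a.prop hta
  have hsqx : ((x : Mat) - 1) * ((x : Mat) - 1) = 0 := unipotent_sq _ x.prop htx
  have hdA : (colM ((a : Mat) - 1) u).det ≠ 0 := colM_det_ne _ _ hsqa hua
  have hdX : (colM ((x : Mat) - 1) u).det ≠ 0 := colM_det_ne _ _ hsqx hux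
  have hdet1 := conjMat_det (a : Mat) (x : Mat) u hdA hdX
  set B : SL2C := ⟨conjMat (a : Mat) (x : Mat) u, hdet1⟩ with hBdef
  refine ⟨B, rfl, ?_⟩
  have hmul : B * x = a * B := by
    apply Subtype.ext
    rw [Matrix.SpecialLinearGroup.coe_mul, Matrix.SpecialLinearGroup.coe_mul]
    exact conjMat_mul _ _ _ hsqa hsqx hdX
  rw [hmul, mul_assoc, mul_inv_cancel, mul_one]

/-- The negation of an element of `SL2C`. -/
def negSL (x : SL2C) : SL2C :=
  ⟨-(x : Mat), by rw [Matrix.det_neg]; simp [x.prop]⟩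

lemma negSL_coe (x : SL2C) : ((negSL x : SL2C) : Mat) = -(x : Mat) := rfl

lemma mk_negSL (x : SL2C) : (QuotientGroup.mk (negSL x) : PSL2) = QuotientGroup.mk x := by
  rw [QuotientGroup.eq, Matrix.SpecialLinearGroup.mem_center_iff]
  refine ⟨-1, by norm_num, ?_⟩
  have hco : (((negSL x)⁻¹ * x : SL2C) : Mat) = -1 := by
    have h1 : (((negSL x)⁻¹ * negSL x : SL2C) : Mat) = 1 := by
      rw [inv_mul_cancel, Matrix.SpecialLinearGroup.coe_one]
    rw [Matrix.SpecialLinearGroup.coe_mul, negSL_coe, mul_neg] at h1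
    rw [Matrix.SpecialLinearGroup.coe_mul]
    exact neg_eq_iff_eq_neg.mp h1
  rw [hco]
  ext i j
  simp only [Matrix.scalar_apply, Matrix.diagonal_apply, Matrix.neg_apply, Matrix.one_apply]
  split_ifs <;> simp

/-- A trace-`2` lift of a parabolic element of `PSL2`. -/
lemma parabolic_lift (γ : PSL2) (hγ : IsParabolic γ) :
    ∃ a : SL2C, (QuotientGroup.mk a : PSL2) = γ ∧ Matrix.trace (a : Mat) = 2 ∧
      (a : Mat) ≠ 1 := by
  obtain ⟨x, hx⟩ : ∃ x : SL2C, (QuotientGroup.mk x : PSL2) = γ := ⟨Quotient.out γ, QuotientGroup.out_eq' γ⟩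
  have hpar : IsParabolic (QuotientGroup.mk x : PSL2) := hx ▸ hγ
  have hne : (QuotientGroup.mk x : PSL2) ≠ 1 := hpar.1
  rcases trace_pm_two x hpar with ht | ht
  · exact ⟨x, hx, ht, (matrix_ne_pm_one x hne).1⟩
  · refine ⟨negSL x, by rw [mk_negSL, hx], ?_, ?_⟩
    · rw [negSL_coe, Matrix.trace_neg, ht]; ring
    · rw [negSL_coe]
      intro h
      exact (matrix_ne_pm_one x hne).2 (neg_eq_iff_eq_neg.mp h)

lemma exists_conj (γ δ : PSL2) (hγ : IsParabolic γ) (hδ : IsParabolic δ) :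
    ∃ β : PSL2, β * γ * β⁻¹ = δ := by
  obtain ⟨a, ha, hta, ha1⟩ := parabolic_lift δ hδ
  obtain ⟨x, hxe, htx, hx1⟩ := parabolic_lift γ hγ
  obtain ⟨u, hua, hux⟩ := exists_good_u ((a : Mat) - 1) ((x : Mat) - 1)
    (sub_ne_zero.mpr ha1) (sub_ne_zero.mpr hx1)
  obtain ⟨b, _, hb⟩ := conj_spec a x hta htx u hua hux
  refine ⟨QuotientGroup.mk b, ?_⟩
  rw [← ha, ← hxe, ← QuotientGroup.mk_inv, ← QuotientGroup.mk_mul, ← QuotientGroup.mk_mul, hb]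

end PNorm

end ParabolicNormalizationAux


noncomputable section ParabolicNormalizationMain

open Matrix Filter Topology

instance : ContinuousMul SL2C :=
  ⟨((continuous_subtype_val.comp continuous_fst).matrix_mul
      (continuous_subtype_val.comp continuous_snd)).subtype_mk _⟩

end ParabolicNormalizationMain

/-- a sequence of parabolics converging to a parabolic can be conjugated
to it by Möbius transformations converging to the identity. -/
theorem parabolic_normalization (P : ℕ → PSL2) (Q : PSL2)
    (hP : ∀ j, IsParabolic (P j)) (hQ : IsParabolic Q)
    (hconv : Tendsto P atTop (𝓝 Q)) :
    ∃ β : ℕ → PSL2, Tendsto β atTop (𝓝 1) ∧ ∀ j, β j * P j * (β j)⁻¹ = Q := by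
  classical
  obtain ⟨a, ha, hta, ha1⟩ := PNorm.parabolic_lift Q hQ
  set C : ℕ → SL2C := fun j => Quotient.out (P j) with hC
  have hmkC : ∀ j, (QuotientGroup.mk (C j) : PSL2) = P j := fun j => QuotientGroup.out_eq' (P j)
  have hparC : ∀ j, IsParabolic (QuotientGroup.mk (C j) : PSL2) := fun j => by
    rw [hmkC j]; exact hP j
  set d : ℕ → SL2C := fun j =>
    if Matrix.trace ((C j : SL2C) : Matrix (Fin 2) (Fin 2) ℂ) = 2 then C j
    else PNorm.negSL (C j) with hd
  have hmkd : ∀ j, (QuotientGroup.mk (d j) : PSL2) = P j := by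
    intro j
    by_cases h : Matrix.trace ((C j : SL2C) : Matrix (Fin 2) (Fin 2) ℂ) = 2
    · simp only [hd, if_pos h]; exact hmkC j
    · simp only [hd, if_neg h]; rw [PNorm.mk_negSL]; exact hmkC j
  have htrd : ∀ j, Matrix.trace ((d j : SL2C) : Matrix (Fin 2) (Fin 2) ℂ) = 2 := by
    intro j
    rcases PNorm.trace_pm_two (C j) (hparC j) with h | h
    · simp only [hd, if_pos h]; exact h
    · have hne : ¬ Matrix.trace ((C j : SL2C) : Matrix (Fin 2) (Fin 2) ℂ) = 2 := by
        rw [h]; intro hcon; norm_num at hcon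
      simp only [hd, if_neg hne, PNorm.negSL_coe, Matrix.trace_neg, h]; ring
  have hd1 : ∀ j, ((d j : SL2C) : Matrix (Fin 2) (Fin 2) ℂ) ≠ 1 := by
    intro j
    have hne : (QuotientGroup.mk (d j) : PSL2) ≠ 1 := by rw [hmkd j]; exact (hP j).1
    exact (PNorm.matrix_ne_pm_one _ hne).1
  -- convergence of the trace-2 lifts
  have hconv' : Tendsto (fun j => ((d j : SL2C) : Matrix (Fin 2) (Fin 2) ℂ)) atTop
      (𝓝 ((a : Matrix (Fin 2) (Fin 2) ℂ))) := by
    rw [tendsto_nhds]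
    intro s hs hmem
    set V : Set SL2C := {y : SL2C |
      ((y : SL2C) : Matrix (Fin 2) (Fin 2) ℂ) ∈ s ∧
      Matrix.trace ((y : SL2C) : Matrix (Fin 2) (Fin 2) ℂ) ≠ -2} with hV
    have hVopen : IsOpen V := by
      have h1 : IsOpen {y : SL2C | ((y : SL2C) : Matrix (Fin 2) (Fin 2) ℂ) ∈ s} :=
        hs.preimage continuous_subtype_val
      have h2 : IsOpen {y : SL2C |
          Matrix.trace ((y : SL2C) : Matrix (Fin 2) (Fin 2) ℂ) ≠ -2} := by
        have hc : Continuous fun y : SL2C =>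
            Matrix.trace ((y : SL2C) : Matrix (Fin 2) (Fin 2) ℂ) :=
          continuous_subtype_val.matrix_trace
        exact isOpen_compl_singleton.preimage hc
      exact h1.inter h2
    have haV : a ∈ V := ⟨hmem, by rw [hta]; intro hcon; norm_num at hcon⟩
    have hopen : IsOpen (QuotientGroup.mk '' V : Set PSL2) :=
      QuotientGroup.isOpenMap_coe V hVopen
    have hQmem : Q ∈ (QuotientGroup.mk '' V : Set PSL2) := ⟨a, haV, ha⟩
    have hev := hconv.eventually_mem (hopen.mem_nhds hQmem)
    filter_upwards [hev] with j hj
    obtain ⟨y, hyV, hymk⟩ := hj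
    have hyd : (QuotientGroup.mk y : PSL2) = QuotientGroup.mk (d j) := by
      rw [hymk, hmkd j]
    rw [QuotientGroup.eq] at hyd
    obtain ⟨r, hr2, hrs⟩ := Matrix.SpecialLinearGroup.mem_center_iff.mp hyd
    have hscal : (Matrix.scalar (Fin 2)) r = r • (1 : Matrix (Fin 2) (Fin 2) ℂ) := by
      rw [Matrix.scalar_apply]
      ext i k
      simp only [Matrix.diagonal_apply, Matrix.smul_apply, Matrix.one_apply, smul_eq_mul]
      split_ifs <;> simp
    have hdy : ((d j : SL2C) : Matrix (Fin 2) (Fin 2) ℂ)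
        = r • ((y : SL2C) : Matrix (Fin 2) (Fin 2) ℂ) := by
      have h1 : (y * (y⁻¹ * d j) : SL2C) = d j := by group
      have h2 := congrArg (fun z : SL2C => (z : Matrix (Fin 2) (Fin 2) ℂ)) h1
      rw [Matrix.SpecialLinearGroup.coe_mul, ← hrs, hscal, Matrix.mul_smul, mul_one] at h2
      exact h2.symm
    have hr2' : r ^ 2 = 1 := by simpa using hr2
    have hcases : r = 1 ∨ r = -1 := by
      have h' : (r - 1) * (r + 1) = 0 := by linear_combination hr2'
      rcases mul_eq_zero.mp h' with h'' | h''
      · left; linear_combination h''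
      · right; linear_combination h''
    show ((d j : SL2C) : Matrix (Fin 2) (Fin 2) ℂ) ∈ s
    rcases hcases with hr | hr
    · rw [hdy, hr, one_smul]; exact hyV.1
    · exfalso
      apply hyV.2
      have h3 := htrd j
      rw [hdy, hr, Matrix.trace_smul] at h3
      simp only [smul_eq_mul, neg_mul, one_mul, neg_smul, one_smul] at h3
      linear_combination -h3
  -- the common test vector
  have hNa : ((a : SL2C) : Matrix (Fin 2) (Fin 2) ℂ) - 1 ≠ 0 := sub_ne_zero.mpr ha1
  obtain ⟨u, hua, -⟩ := PNorm.exists_good_u _ _ hNa hNa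
  have hsqa : (((a : SL2C) : Matrix (Fin 2) (Fin 2) ℂ) - 1)
      * (((a : SL2C) : Matrix (Fin 2) (Fin 2) ℂ) - 1) = 0 :=
    PNorm.unipotent_sq _ a.prop hta
  have hgoodev : ∀ᶠ j in atTop,
      (((d j : SL2C) : Matrix (Fin 2) (Fin 2) ℂ) - 1) *ᵥ u ≠ 0 := by
    have hc : Continuous fun X : Matrix (Fin 2) (Fin 2) ℂ => (X - 1) *ᵥ u :=
      (continuous_id.sub continuous_const).matrix_mulVec continuous_const
    have hcont := (hc.tendsto _).comp hconv'
    exact hcont.eventually_mem (isOpen_compl_singleton.mem_nhds hua)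
  -- the conjugators
  set bb : ℕ → SL2C := fun j =>
    if h : (((d j : SL2C) : Matrix (Fin 2) (Fin 2) ℂ) - 1) *ᵥ u ≠ 0 then
      (PNorm.conj_spec a (d j) hta (htrd j) u hua h).choose
    else 1 with hbb
  set β : ℕ → PSL2 := fun j =>
    if h : (((d j : SL2C) : Matrix (Fin 2) (Fin 2) ℂ) - 1) *ᵥ u ≠ 0 then
      QuotientGroup.mk ((PNorm.conj_spec a (d j) hta (htrd j) u hua h).choose)
    else (PNorm.exists_conj (P j) Q (hP j) hQ).choose with hβ
  refine ⟨β, ?_, ?_⟩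
  · -- Tendsto β atTop (𝓝 1)
    set M : Matrix (Fin 2) (Fin 2) ℂ :=
      PNorm.colM (((a : SL2C) : Matrix (Fin 2) (Fin 2) ℂ) - 1) u with hM
    have hdM : M.det ≠ 0 := PNorm.colM_det_ne _ _ hsqa hua
    have hMtend : Tendsto (fun j =>
        PNorm.colM (((d j : SL2C) : Matrix (Fin 2) (Fin 2) ℂ) - 1) u) atTop (𝓝 M) := by
      have hc : Continuous fun X : Matrix (Fin 2) (Fin 2) ℂ => PNorm.colM (X - 1) u := by
        apply continuous_matrix
        intro i k
        by_cases hk : k = 0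
        · simpa [PNorm.colM, hk] using continuous_const
        · simp only [PNorm.colM, Matrix.of_apply, if_neg hk]
          exact (continuous_apply i).comp
            ((continuous_id.sub continuous_const).matrix_mulVec continuous_const)
      exact (hc.tendsto _).comp hconv'
    have hdet_tend : Tendsto (fun j =>
        (PNorm.colM (((d j : SL2C) : Matrix (Fin 2) (Fin 2) ℂ) - 1) u).det) atTop
        (𝓝 M.det) := ((continuous_id.matrix_det).tendsto _).comp hMtend
    have hratio : Tendsto (fun j =>
        (PNorm.colM (((d j : SL2C) : Matrix (Fin 2) (Fin 2) ℂ) - 1) u).det / M.det) atTop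
        (𝓝 1) := by
      have := hdet_tend.div_const M.det
      rwa [div_self hdM] at this
    have hs : Tendsto (fun j =>
        ((PNorm.colM (((d j : SL2C) : Matrix (Fin 2) (Fin 2) ℂ) - 1) u).det / M.det)
          ^ ((1 : ℂ)/2)) atTop (𝓝 1) := by
      have hc : ContinuousAt (· ^ ((1 : ℂ)/2)) (1 : ℂ) :=
        continuousAt_cpow_const Complex.one_mem_slitPlane
      have := hc.tendsto.comp hratio
      rwa [Complex.one_cpow] at this
    have hinv : Tendsto (fun j =>
        ((PNorm.colM (((d j : SL2C) : Matrix (Fin 2) (Fin 2) ℂ) - 1) u).det)⁻¹) atTop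
        (𝓝 (M.det)⁻¹) := hdet_tend.inv₀ hdM
    have hB0 : Tendsto (fun j =>
        M * (PNorm.colM (((d j : SL2C) : Matrix (Fin 2) (Fin 2) ℂ) - 1) u).adjugate) atTop
        (𝓝 (M * M.adjugate)) :=
      ((continuous_const.matrix_mul (continuous_id.matrix_adjugate)).tendsto _).comp hMtend
    have hcomb := hs.smul (hinv.smul hB0)
    have hval : (1 : ℂ) • ((M.det)⁻¹ • (M * M.adjugate)) = (1 : Matrix (Fin 2) (Fin 2) ℂ) := by
      rw [Matrix.mul_adjugate, smul_smul, one_mul, smul_smul, inv_mul_cancel₀ hdM, one_smul]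
    rw [hval] at hcomb
    have hconjtend : Tendsto (fun j =>
        PNorm.conjMat ((a : SL2C) : Matrix (Fin 2) (Fin 2) ℂ)
          ((d j : SL2C) : Matrix (Fin 2) (Fin 2) ℂ) u) atTop
        (𝓝 (1 : Matrix (Fin 2) (Fin 2) ℂ)) := hcomb
    have hbbtend : Tendsto (fun j => ((bb j : SL2C) : Matrix (Fin 2) (Fin 2) ℂ)) atTop
        (𝓝 ((1 : SL2C) : Matrix (Fin 2) (Fin 2) ℂ)) := by
      rw [Matrix.SpecialLinearGroup.coe_one]
      apply hconjtend.congr'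
      filter_upwards [hgoodev] with j h
      rw [hbb]
      simp only [dif_pos h]
      exact ((PNorm.conj_spec a (d j) hta (htrd j) u hua h).choose_spec).1.symm
    have hbbtend' : Tendsto bb atTop (𝓝 (1 : SL2C)) :=
      (Topology.IsEmbedding.subtypeVal.tendsto_nhds_iff).mpr hbbtend
    have hmk : Tendsto (fun j => (QuotientGroup.mk (bb j) : PSL2)) atTop (𝓝 1) := by
      have hcm : Continuous (QuotientGroup.mk : SL2C → PSL2) := QuotientGroup.continuous_mk
      have := (hcm.tendsto (1 : SL2C)).comp hbbtend'
      exact this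
    apply hmk.congr'
    filter_upwards [hgoodev] with j h
    rw [hbb, hβ]
    simp only [dif_pos h]
  · -- conjugation identity for every j
    intro j
    by_cases h : (((d j : SL2C) : Matrix (Fin 2) (Fin 2) ℂ) - 1) *ᵥ u ≠ 0
    · have hb := ((PNorm.conj_spec a (d j) hta (htrd j) u hua h).choose_spec).2
      rw [hβ]
      simp only [dif_pos h]
      rw [← hmkd j, ← ha, ← QuotientGroup.mk_inv, ← QuotientGroup.mk_mul,
        ← QuotientGroup.mk_mul, hb]
    · rw [hβ]
      simp only [dif_neg h]
      exact (PNorm.exists_conj (P j) Q (hP j) hQ).choose_spec
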